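/- Let β > 0. There is no voting rule f, defined on all preference profiles over nonempty subsets of a fixed three-element candidate set {a,b,c}, such that both: (i) f coincides with the majority rule on two-candidate profiles, i.e., whenever strictly more voters rank u above v in a profile over {u,v}, then f of that profile equals {u}; and (ii) f is independent of β-swap clones. Equivalently, every voting rule satisfying (i) admits a profile P over {a,b,c} and a pair of β-swap clones {x,y} in P for which the independence conditions fail for P_{-x}. -/

import Mathlib

open Finset

/-- A ranking (strict total order) of the candidate set `D ⊆ {a,b,c} = Fin 3`, encoded as a
duplicate-free list (best candidate first) whose set of elements is exactly `D`. -/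
def Ranking (D : Finset (Fin 3)) : Type := {l : List (Fin 3) // l.Nodup ∧ l.toFinset = D}

/-- The (0-indexed) position of candidate `x` in ranking `r`. -/
def rpos {D : Finset (Fin 3)} (r : Ranking D) (x : Fin 3) : ℕ := r.val.idxOf x

/-- Delete candidate `x` from a ranking. -/
def eraseCand {D : Finset (Fin 3)} (x : Fin 3) (r : Ranking D) : Ranking (D.erase x) :=
  ⟨r.val.erase x, r.2.1.erase x, by
    ext c
    simp [List.Nodup.mem_erase_iff r.2.1, Finset.mem_erase, ← r.2.2]⟩

/- ### Auxiliary material for the proof -/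

def rABC : Ranking univ := ⟨[0,1,2], by decide, by decide⟩
def rCBA : Ranking univ := ⟨[2,1,0], by decide, by decide⟩
def rBCA : Ranking univ := ⟨[1,2,0], by decide, by decide⟩

/-- The profile with `N` voters `a≻b≻c`, `N` voters `c≻b≻a` and one voter `b≻c≻a`. -/
def prof (N : ℕ) (i : Fin (2*N+1)) : Ranking univ :=
  if i.val < N then rABC else if i.val < 2*N then rCBA else rBCA

/-- Transport a ranking along an equality of candidate sets. -/
def rcast {D D' : Finset (Fin 3)} (h : D = D') (r : Ranking D) : Ranking D' :=
  ⟨r.1, r.2.1, h ▸ r.2.2⟩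

lemma rpos_rcast {D D' : Finset (Fin 3)} (h : D = D') (r : Ranking D) (x : Fin 3) :
    rpos (rcast h r) x = rpos r x := rfl

lemma f_cast (f : (D : Finset (Fin 3)) → (n : ℕ) → (Fin n → Ranking D) → Finset (Fin 3))
    {D D' : Finset (Fin 3)} (h : D = D') (n : ℕ) (Q : Fin n → Ranking D) :
    f D' n (fun i => rcast h (Q i)) = f D n Q := by subst h; rfl

lemma card_filter_val (n : ℕ) (q : ℕ → Prop) [DecidablePred q] :
    (univ.filter fun i : Fin n => q i.val).card = ((range n).filter q).card := by
  apply Finset.card_bij (fun a _ => a.val)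
  · intro a ha; simp only [mem_filter, mem_univ, true_and] at ha
    simp [mem_filter, mem_range, a.isLt, ha]
  · intro a _ b _ h; exact Fin.val_injective h
  · intro b hb; simp only [mem_filter, mem_range] at hb
    exact ⟨⟨b, hb.1⟩, by simp [mem_filter, hb.2], rfl⟩

lemma termval {D : Finset (Fin 3)} (r : Ranking D) (x y : Fin 3) (k : ℕ)
    (h : ((rpos r x : ℤ) - (rpos r y : ℤ)).natAbs = k) :
    ((((rpos r x : ℤ) - (rpos r y : ℤ)).natAbs : ℝ) - 1) = (k : ℝ) - 1 := by rw [h]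

lemma fin3_eq_one (s : Fin 3) (h0 : s ≠ 0) (h2 : s ≠ 2) : s = 1 := by
  revert h0 h2; revert s; decide

/-- **Impossibility of independence of `β`-swap clones (`β > 0`).**
There is no voting rule `f`, defined on all preference profiles over nonempty subsets of
the fixed three-element candidate set `Fin 3`, such that (i) `f` coincides with the
majority rule on two-candidate profiles and (ii) `f` is independent of `β`-swap clones:
for every profile `P` with `n ≥ 1` voters and every pair `x ≠ y` of `β`-swap clones in `P`,
(1) for all `z ∉ {x,y}`, `z ∈ f(P) ↔ z ∈ f(P₋ₓ)`, and
(2) `f(P) ∩ {x,y} ≠ ∅ ↔ y ∈ f(P₋ₓ)`. -/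
theorem no_rule_indep_swap_clones (β : ℝ) (hβ : 0 < β) :
    ¬ ∃ f : (D : Finset (Fin 3)) → (n : ℕ) → (Fin n → Ranking D) → Finset (Fin 3),
      -- `f` is a voting rule: winners form a nonempty subset of the candidate set
      (∀ (D : Finset (Fin 3)) (n : ℕ) (P : Fin n → Ranking D),
        D.Nonempty → 1 ≤ n → (f D n P).Nonempty ∧ f D n P ⊆ D) ∧
      -- (i) majority rule on two-candidate profiles
      (∀ (u v : Fin 3), u ≠ v → ∀ (n : ℕ) (P : Fin n → Ranking {u, v}),
        (univ.filter fun i => rpos (P i) v < rpos (P i) u).card <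
          (univ.filter fun i => rpos (P i) u < rpos (P i) v).card →
        f {u, v} n P = {u}) ∧
      -- (ii) independence of `β`-swap clones
      (∀ (D : Finset (Fin 3)) (n : ℕ), 1 ≤ n → ∀ (P : Fin n → Ranking D) (x y : Fin 3),
        x ∈ D → y ∈ D → x ≠ y →
        (∑ i : Fin n, ((((rpos (P i) x : ℤ) - (rpos (P i) y : ℤ)).natAbs : ℝ) - 1)) / n ≤ β →
        (∀ z : Fin 3, z ≠ x → z ≠ y →
          (z ∈ f D n P ↔ z ∈ f (D.erase x) n (fun i => eraseCand x (P i)))) ∧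
        ((f D n P ∩ {x, y}).Nonempty ↔
          y ∈ f (D.erase x) n (fun i => eraseCand x (P i)))) := by
  rintro ⟨f, hrule, hmaj, hclone⟩
  set N : ℕ := ⌈β⁻¹⌉₊ with hNdef
  set n : ℕ := 2*N+1 with hndef
  have hn1 : 1 ≤ n := by omega
  set P : Fin n → Ranking univ := prof N with hPdef
  -- the clone bound, for any pair whose positions differ by 2 only in the last vote
  have hNβ : (β⁻¹ : ℝ) ≤ N := Nat.le_ceil _
  have hnpos : (0:ℝ) < (n:ℝ) := by positivity
  have hbound : (1:ℝ) / n ≤ β := by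
    rw [div_le_iff₀ hnpos]
    have h1 : (1:ℝ) = β * β⁻¹ := (mul_inv_cancel₀ hβ.ne').symm
    have h2 : β * β⁻¹ ≤ β * N := mul_le_mul_of_nonneg_left hNβ hβ.le
    have h3 : (N:ℝ) ≤ (n:ℝ) := by
      have : N ≤ n := by omega
      exact_mod_cast this
    nlinarith
  -- sum for the pair {0,1}
  have hsum01 : ∀ x y : Fin 3, ((x = 0 ∧ y = 1) ∨ (x = 1 ∧ y = 0)) →
      (∑ i : Fin n, ((((rpos (P i) x : ℤ) - (rpos (P i) y : ℤ)).natAbs : ℝ) - 1)) / n ≤ β := by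
    intro x y hxy'
    have hterm : ∀ i : Fin n,
        ((((rpos (P i) x : ℤ) - (rpos (P i) y : ℤ)).natAbs : ℝ) - 1)
          = if 2*N ≤ i.val then 1 else 0 := by
      intro i
      simp only [hPdef, prof]
      rcases hxy' with ⟨hx, hy⟩ | ⟨hx, hy⟩ <;> subst hx <;> subst hy <;>
        split_ifs with h1 h2 <;>
        first
          | (exfalso; omega)
          | (rw [termval _ _ _ 1 (by decide)]; norm_num)
          | (rw [termval _ _ _ 2 (by decide)]; norm_num)
    calc (∑ i : Fin n, ((((rpos (P i) x : ℤ) - (rpos (P i) y : ℤ)).natAbs : ℝ) - 1)) / n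
        = (∑ i : Fin n, if 2*N ≤ i.val then (1:ℝ) else 0) / n := by
          congr 1; exact Finset.sum_congr rfl (fun i _ => hterm i)
      _ = ((univ.filter fun i : Fin n => 2*N ≤ i.val).card : ℝ) / n := by
          rw [Finset.sum_boole]
      _ = (1:ℝ) / n := by
          have hset : ((range n).filter fun k => 2*N ≤ k) = {2*N} := by
            ext k
            simp only [mem_filter, mem_range, mem_singleton, hndef]
            omega
          have h := card_filter_val n (fun k => 2*N ≤ k)
          rw [hset, card_singleton] at h
          rw [h]
          norm_num
      _ ≤ β := hbound
  -- sum for the pair {1,2}: always adjacent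
  have hsum12 :
      (∑ i : Fin n, ((((rpos (P i) 1 : ℤ) - (rpos (P i) 2 : ℤ)).natAbs : ℝ) - 1)) / n ≤ β := by
    have hterm : ∀ i : Fin n,
        ((((rpos (P i) 1 : ℤ) - (rpos (P i) 2 : ℤ)).natAbs : ℝ) - 1) = 0 := by
      intro i
      simp only [hPdef, prof]
      split_ifs with h1 h2 <;> (rw [termval _ _ _ 1 (by decide)]; norm_num)
    rw [Finset.sum_congr rfl (fun i _ => hterm i)]
    simp [hβ.le]
  -- majority outcome after deleting candidate 0 : b = 1 beats c = 2
  have hE0 : ((univ : Finset (Fin 3)).erase 0) = ({1, 2} : Finset (Fin 3)) := by decide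
  have hmaj0 : f ((univ : Finset (Fin 3)).erase 0) n (fun i => eraseCand 0 (P i)) = {1} := by
    rw [← f_cast f hE0 n (fun i => eraseCand 0 (P i))]
    apply hmaj 1 2 (by decide)
    have hc1 : (univ.filter fun i : Fin n =>
        rpos ((rcast hE0 (eraseCand 0 (P i))) : Ranking {1,2}) 1 <
        rpos ((rcast hE0 (eraseCand 0 (P i))) : Ranking {1,2}) 2).card = N + 1 := by
      have : ∀ i ∈ (univ : Finset (Fin n)),
          (rpos ((rcast hE0 (eraseCand 0 (P i))) : Ranking {1,2}) 1 <
            rpos ((rcast hE0 (eraseCand 0 (P i))) : Ranking {1,2}) 2)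
          ↔ (i.val < N ∨ 2*N ≤ i.val) := by
        intro i _
        rw [rpos_rcast, rpos_rcast]
        simp only [hPdef, prof]
        split_ifs with h1 h2
        · exact iff_of_true (by decide) (Or.inl h1)
        · exact iff_of_false (by decide) (by omega)
        · exact iff_of_true (by decide) (Or.inr (by omega))
      rw [filter_congr this, card_filter_val n (fun k => k < N ∨ 2*N ≤ k)]
      have : ((range n).filter fun k => k < N ∨ 2*N ≤ k) = insert (2*N) (range N) := by
        ext k; simp only [mem_filter, mem_range, mem_insert, hndef]; omega
      rw [this, card_insert_of_notMem (by simp; omega), card_range]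
    have hc2 : (univ.filter fun i : Fin n =>
        rpos ((rcast hE0 (eraseCand 0 (P i))) : Ranking {1,2}) 2 <
        rpos ((rcast hE0 (eraseCand 0 (P i))) : Ranking {1,2}) 1).card = N := by
      have : ∀ i ∈ (univ : Finset (Fin n)),
          (rpos ((rcast hE0 (eraseCand 0 (P i))) : Ranking {1,2}) 2 <
            rpos ((rcast hE0 (eraseCand 0 (P i))) : Ranking {1,2}) 1)
          ↔ (N ≤ i.val ∧ i.val < 2*N) := by
        intro i _
        rw [rpos_rcast, rpos_rcast]
        simp only [hPdef, prof]
        split_ifs with h1 h2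
        · exact iff_of_false (by decide) (by omega)
        · exact iff_of_true (by decide) (by omega)
        · exact iff_of_false (by decide) (by omega)
      rw [filter_congr this, card_filter_val n (fun k => N ≤ k ∧ k < 2*N)]
      have : ((range n).filter fun k => N ≤ k ∧ k < 2*N) = Finset.Ico N (2*N) := by
        ext k; simp only [mem_filter, mem_range, Finset.mem_Ico, hndef]; omega
      rw [this, Nat.card_Ico]; omega
    rw [hc1, hc2]; omega
  -- majority outcome after deleting candidate 1 : c = 2 beats a = 0
  have hE1 : ((univ : Finset (Fin 3)).erase 1) = ({2, 0} : Finset (Fin 3)) := by decide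
  have hmaj1 : f ((univ : Finset (Fin 3)).erase 1) n (fun i => eraseCand 1 (P i)) = {2} := by
    rw [← f_cast f hE1 n (fun i => eraseCand 1 (P i))]
    apply hmaj 2 0 (by decide)
    have hc1 : (univ.filter fun i : Fin n =>
        rpos ((rcast hE1 (eraseCand 1 (P i))) : Ranking {2,0}) 2 <
        rpos ((rcast hE1 (eraseCand 1 (P i))) : Ranking {2,0}) 0).card = N + 1 := by
      have : ∀ i ∈ (univ : Finset (Fin n)),
          (rpos ((rcast hE1 (eraseCand 1 (P i))) : Ranking {2,0}) 2 <
            rpos ((rcast hE1 (eraseCand 1 (P i))) : Ranking {2,0}) 0)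
          ↔ (N ≤ i.val) := by
        intro i _
        rw [rpos_rcast, rpos_rcast]
        simp only [hPdef, prof]
        split_ifs with h1 h2
        · exact iff_of_false (by decide) (by omega)
        · exact iff_of_true (by decide) (by omega)
        · exact iff_of_true (by decide) (by omega)
      rw [filter_congr this, card_filter_val n (fun k => N ≤ k)]
      have : ((range n).filter fun k => N ≤ k) = Finset.Ico N n := by
        ext k; simp only [mem_filter, mem_range, Finset.mem_Ico]; omega
      rw [this, Nat.card_Ico]; omega
    have hc2 : (univ.filter fun i : Fin n =>
        rpos ((rcast hE1 (eraseCand 1 (P i))) : Ranking {2,0}) 0 <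
        rpos ((rcast hE1 (eraseCand 1 (P i))) : Ranking {2,0}) 2).card = N := by
      have : ∀ i ∈ (univ : Finset (Fin n)),
          (rpos ((rcast hE1 (eraseCand 1 (P i))) : Ranking {2,0}) 0 <
            rpos ((rcast hE1 (eraseCand 1 (P i))) : Ranking {2,0}) 2)
          ↔ (i.val < N) := by
        intro i _
        rw [rpos_rcast, rpos_rcast]
        simp only [hPdef, prof]
        split_ifs with h1 h2
        · exact iff_of_true (by decide) h1
        · exact iff_of_false (by decide) (by omega)
        · exact iff_of_false (by decide) (by omega)
      rw [filter_congr this, card_filter_val n (fun k => k < N)]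
      have : ((range n).filter fun k => k < N) = range N := by
        ext k; simp only [mem_filter, mem_range, hndef]; omega
      rw [this, card_range]
    rw [hc1, hc2]; omega
  -- now derive the contradiction
  set S : Finset (Fin 3) := f univ n P with hSdef
  have hSne : S.Nonempty := (hrule univ n P ⟨0, mem_univ 0⟩ hn1).1
  -- clone pair (0,1): 2 ∉ S
  have hcl01 := hclone univ n hn1 P 0 1 (mem_univ 0) (mem_univ 1) (by decide)
    (hsum01 0 1 (Or.inl ⟨rfl, rfl⟩))
  have h2S : 2 ∉ S := by
    intro h2
    have := (hcl01.1 2 (by decide) (by decide)).1 h2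
    rw [hmaj0] at this
    exact absurd this (by decide)
  -- clone pair (1,2): 0 ∉ S
  have hcl12 := hclone univ n hn1 P 1 2 (mem_univ 1) (mem_univ 2) (by decide) hsum12
  have h0S : 0 ∉ S := by
    intro h0
    have := (hcl12.1 0 (by decide) (by decide)).1 h0
    rw [hmaj1] at this
    exact absurd this (by decide)
  -- hence S = {1}, i.e. 1 ∈ S
  obtain ⟨s, hs⟩ := hSne
  have hs1 : s = 1 := fin3_eq_one s (fun h => h0S (h ▸ hs)) (fun h => h2S (h ▸ hs))
  have h1S : (1 : Fin 3) ∈ S := hs1 ▸ hs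
  -- clone pair (1,0): contradiction via condition (2)
  have hcl10 := hclone univ n hn1 P 1 0 (mem_univ 1) (mem_univ 0) (by decide)
    (hsum01 1 0 (Or.inr ⟨rfl, rfl⟩))
  have := hcl10.2.1 ⟨1, mem_inter.mpr ⟨h1S, by decide⟩⟩
  rw [hmaj1] at this
  exact absurd this (by decide)
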